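/- arXiv:1305.0685 — 5 statements merged into one kernel-verified Lean document; each statement's English description precedes it below -/
import Mathlib

section
/- The module M(s,ε) is an irreducible sl₂-module: if W is a nonzero subspace of M(s,ε) closed under the actions of E, F, and H, then W = M(s,ε). -/
noncomputable def Eop (s : ℂ) (ε : ℤ) : (ℤ →₀ ℂ) →ₗ[ℂ] (ℤ →₀ ℂ) :=
  Finsupp.lsum ℂ fun k : ℤ =>
    ((s + ((ε : ℂ) + 2 * (k : ℂ)) + 1) / 2) • Finsupp.lsingle (k + 1)

noncomputable def Fop (s : ℂ) (ε : ℤ) : (ℤ →₀ ℂ) →ₗ[ℂ] (ℤ →₀ ℂ) :=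
  Finsupp.lsum ℂ fun k : ℤ =>
    ((s - ((ε : ℂ) + 2 * (k : ℂ)) + 1) / 2) • Finsupp.lsingle (k - 1)

noncomputable def Hop (ε : ℤ) : (ℤ →₀ ℂ) →ₗ[ℂ] (ℤ →₀ ℂ) :=
  Finsupp.lsum ℂ fun k : ℤ =>
    ((ε : ℂ) + 2 * (k : ℂ)) • Finsupp.lsingle k

lemma Hop_coeff (ε : ℤ) (w : ℤ →₀ ℂ) (j : ℤ) : Hop ε w j = ((ε:ℂ) + 2*j) * w j := by
  rw [Hop, Finsupp.lsum_apply, Finsupp.sum_apply, Finsupp.sum]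
  rw [Finset.sum_eq_single j]
  · simp only [LinearMap.smul_apply, Finsupp.lsingle_apply, Finsupp.smul_apply,
      Finsupp.single_eq_same, smul_eq_mul]
  · intro b _ hb
    simp only [LinearMap.smul_apply, Finsupp.lsingle_apply, Finsupp.smul_apply,
      Finsupp.single_eq_of_ne' hb, smul_eq_mul, mul_zero]
  · intro h
    rw [Finsupp.notMem_support_iff.mp h, map_zero]
    rfl

lemma Eop_single (s : ℂ) (ε k : ℤ) :
    Eop s ε (Finsupp.single k 1) = ((s + ((ε:ℂ) + 2*k) + 1)/2) • Finsupp.single (k+1) 1 := by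
  rw [Eop, Finsupp.lsum_single, LinearMap.smul_apply, Finsupp.lsingle_apply]

lemma Fop_single (s : ℂ) (ε k : ℤ) :
    Fop s ε (Finsupp.single k 1) = ((s - ((ε:ℂ) + 2*k) + 1)/2) • Finsupp.single (k-1) 1 := by
  rw [Fop, Finsupp.lsum_single, LinearMap.smul_apply, Finsupp.lsingle_apply]

/-- M(s,ε) is irreducible: any nonzero subspace closed under E, F, H is everything. -/
theorem stmt0 (s : ℂ) (ε : ℤ) (hε : ε = 0 ∨ ε = 1)
    (hs : ∀ k : ℤ, s - (ε : ℂ) ≠ 2 * (k : ℂ) + 1)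
    (W : Submodule ℂ (ℤ →₀ ℂ))
    (hE : ∀ w ∈ W, Eop s ε w ∈ W)
    (hF : ∀ w ∈ W, Fop s ε w ∈ W)
    (hH : ∀ w ∈ W, Hop ε w ∈ W)
    (hW : W ≠ ⊥) : W = ⊤ := by
  -- nonvanishing of E and F coefficients
  have hEc : ∀ k : ℤ, (s + ((ε:ℂ) + 2*k) + 1)/2 ≠ 0 := by
    intro k h
    apply hs (-ε - k - 1)
    have : s + ((ε:ℂ) + 2*k) + 1 = 0 := by
      field_simp at h; linear_combination h
    push_cast
    linear_combination this
  have hFc : ∀ k : ℤ, (s - ((ε:ℂ) + 2*k) + 1)/2 ≠ 0 := by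
    intro k h
    apply hs (k - 1)
    have : s - ((ε:ℂ) + 2*k) + 1 = 0 := by
      field_simp at h; linear_combination h
    push_cast
    linear_combination this
  -- Step 1: some basis vector lies in W
  obtain ⟨w0, hw0W, hw0⟩ : ∃ w ∈ W, w ≠ 0 := by
    by_contra h
    push_neg at h
    exact hW (by ext x; simp only [Submodule.mem_bot]; exact ⟨fun hx => h x hx, fun hx => hx ▸ W.zero_mem⟩)
  have key : ∃ k : ℤ, Finsupp.single k (1:ℂ) ∈ W := by
    -- strong induction on support card
    have : ∀ n : ℕ, ∀ w : ℤ →₀ ℂ, w ∈ W → w ≠ 0 → w.support.card ≤ n →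
        ∃ k : ℤ, Finsupp.single k (1:ℂ) ∈ W := by
      intro n
      induction n with
      | zero =>
        intro w _ hne hcard
        exact absurd (Finsupp.support_eq_empty.mp (Finset.card_eq_zero.mp (Nat.le_zero.mp hcard))) hne
      | succ n ih =>
        intro w hwW hne hcard
        obtain ⟨k, hk⟩ := Finsupp.support_nonempty_iff.mpr hne
        by_cases hone : w.support.card = 1
        · -- w = c • single k
          refine ⟨k, ?_⟩
          have hsupp : w.support = {k} := Finset.eq_singleton_iff_unique_mem.mpr
            ⟨hk, fun x hx => Finset.card_le_one.mp (le_of_eq hone) x hx k hk⟩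
          have hwk : w k ≠ 0 := Finsupp.mem_support_iff.mp hk
          obtain ⟨c, hc, hw⟩ : ∃ c : ℂ, c ≠ 0 ∧ w = c • Finsupp.single k 1 := by
            refine ⟨w k, hwk, ?_⟩
            ext j
            by_cases hj : j = k
            · subst hj; simp
            · have h0 : w j = 0 := Finsupp.notMem_support_iff.mp (by rw [hsupp]; simp [hj])
              rw [h0, Finsupp.smul_apply, Finsupp.single_apply, if_neg (Ne.symm hj), smul_zero]
          have hmem := W.smul_mem c⁻¹ hwW
          rw [hw, smul_smul, inv_mul_cancel₀ hc, one_smul] at hmem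
          exact hmem
        · -- kill coefficient at k using H - (ε+2k)
          set w' : ℤ →₀ ℂ := Hop ε w - ((ε:ℂ) + 2*k) • w with hw'
          have hw'W : w' ∈ W := W.sub_mem (hH w hwW) (W.smul_mem _ hwW)
          have hw'c : ∀ j, w' j = 2*((j:ℂ) - k) * w j := by
            intro j
            simp only [hw', Finsupp.sub_apply, Finsupp.smul_apply, Hop_coeff, smul_eq_mul]
            ring
          have hsub : w'.support ⊆ w.support.erase k := by
            intro j hj
            rw [Finsupp.mem_support_iff, hw'c] at hj
            rcases mul_ne_zero_iff.mp hj with ⟨h1, h2⟩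
            refine Finset.mem_erase.mpr ⟨?_, Finsupp.mem_support_iff.mpr h2⟩
            intro hjk
            apply h1
            rw [hjk]; ring
          have hne' : w' ≠ 0 := by
            obtain ⟨m, hm, hmk⟩ : ∃ m ∈ w.support, m ≠ k := by
              by_contra hc
              push_neg at hc
              exact hone (Finset.card_eq_one.mpr ⟨k, Finset.eq_singleton_iff_unique_mem.mpr ⟨hk, hc⟩⟩)
            intro h0
            have hm0 : (2:ℂ)*((m:ℂ) - k) * w m = 0 := by
              rw [← hw'c m, h0]; rfl
            have hmne : (2:ℂ)*((m:ℂ) - k) ≠ 0 := by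
              have hne2 : (m:ℂ) ≠ (k:ℂ) := by exact_mod_cast hmk
              intro h
              rcases mul_eq_zero.mp h with h | h
              · norm_num at h
              · exact hne2 (by linear_combination h)
            rcases mul_eq_zero.mp hm0 with h | h
            · exact hmne h
            · exact Finsupp.mem_support_iff.mp hm h
          refine ih w' hw'W hne' ?_
          calc w'.support.card ≤ (w.support.erase k).card := Finset.card_le_card hsub
            _ = w.support.card - 1 := Finset.card_erase_of_mem hk
            _ ≤ n := by omega
    exact this w0.support.card w0 hw0W hw0 le_rfl
  obtain ⟨k0, hk0⟩ := key
  -- Step 2: all basis vectors lie in W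
  have step_up : ∀ k : ℤ, Finsupp.single k (1:ℂ) ∈ W → Finsupp.single (k+1) (1:ℂ) ∈ W := by
    intro k hk
    have := hE _ hk
    rw [Eop_single] at this
    have := W.smul_mem ((s + ((ε:ℂ) + 2*k) + 1)/2)⁻¹ this
    rwa [smul_smul, inv_mul_cancel₀ (hEc k), one_smul] at this
  have step_down : ∀ k : ℤ, Finsupp.single k (1:ℂ) ∈ W → Finsupp.single (k-1) (1:ℂ) ∈ W := by
    intro k hk
    have := hF _ hk
    rw [Fop_single] at this
    have := W.smul_mem ((s - ((ε:ℂ) + 2*k) + 1)/2)⁻¹ this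
    rwa [smul_smul, inv_mul_cancel₀ (hFc k), one_smul] at this
  have all : ∀ k : ℤ, Finsupp.single k (1:ℂ) ∈ W := by
    have aux : ∀ n : ℤ, Finsupp.single (k0 + n) (1:ℂ) ∈ W := by
      intro n
      induction n using Int.induction_on with
      | zero => simpa using hk0
      | succ m hm =>
        have := step_up _ hm
        rwa [show k0 + (m:ℤ) + 1 = k0 + ((m:ℤ)+1) by ring] at this
      | pred m hm =>
        have := step_down _ hm
        rwa [show k0 + (-(m:ℤ)) - 1 = k0 + (-(m:ℤ)-1) by ring] at this
    intro k
    have := aux (k - k0)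
    rwa [show k0 + (k - k0) = k by ring] at this
  -- Step 3: conclude
  rw [eq_top_iff]
  intro w _
  rw [← Finsupp.sum_single w]
  apply Submodule.finsuppSum_mem
  intro k _
  have : Finsupp.single k (w k) = (w k) • Finsupp.single k (1:ℂ) := by
    rw [Finsupp.smul_single, smul_eq_mul, mul_one]
  rw [this]
  exact W.smul_mem _ (all k)
end

section
/- The operators L₊ and L₋ on the space of functions a : ℤ² → ℂ satisfy the commutation relation [L₊, L₋] = 2(L₊ - L₋), so they span a two-dimensional solvable Lie algebra. -/
/-- (L₊a)(n,m) = (p+n)a(n+2,m) + (s+m)a(n,m+2) + (r-n-m)a(n,m) -/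
def Lp (p s r : ℂ) (a : ℤ × ℤ → ℂ) : ℤ × ℤ → ℂ := fun z =>
  (p + (z.1 : ℂ)) * a (z.1 + 2, z.2) + (s + (z.2 : ℂ)) * a (z.1, z.2 + 2) +
    (r - (z.1 : ℂ) - (z.2 : ℂ)) * a z

/-- (L₋a)(n,m) = (p-n)a(n-2,m) + (s-m)a(n,m-2) + (r+n+m)a(n,m) -/
def Lm (p s r : ℂ) (a : ℤ × ℤ → ℂ) : ℤ × ℤ → ℂ := fun z =>
  (p - (z.1 : ℂ)) * a (z.1 - 2, z.2) + (s - (z.2 : ℂ)) * a (z.1, z.2 - 2) +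
    (r + (z.1 : ℂ) + (z.2 : ℂ)) * a z

/-- The commutation relation [L₊, L₋] = 2(L₊ - L₋). -/
theorem stmt4 (p s r : ℂ) (a : ℤ × ℤ → ℂ) (z : ℤ × ℤ) :
    Lp p s r (Lm p s r a) z - Lm p s r (Lp p s r a) z
      = 2 * (Lp p s r a z - Lm p s r a z) := by
  obtain ⟨n, m⟩ := z
  simp only [Lp, Lm]
  push_cast
  ring_nf
end

section
/- If a function a : ℤ² → ℂ satisfies the two difference equations (s₁+n+1)a(n+2,m) + (s₂+m+1)a(n,m+2) + (s₃-n-m-1)a(n,m) = 0 and (s₁-n+1)a(n-2,m) + (s₂-m+1)a(n,m-2) + (s₃+n+m-1)a(n,m) = 0 for all n,m, then it satisfies the second-order diagonal equation (s₁-n+1)(s₂+m+1)a(n-2,m+2) - (s₃² - s₁² - s₂² - 2nm + 1)a(n,m) + (s₁+n+1)(s₂-m+1)a(n+2,m-2) = 0. -/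
/-- If a : ℤ² → ℂ satisfies the two first-order difference equations (1.3.1),
    (1.3.2), then it satisfies the second-order diagonal equation (1.3.3). -/
theorem stmt6 (s₁ s₂ s₃ : ℂ) (a : ℤ → ℤ → ℂ)
    (h1 : ∀ n m : ℤ, (s₁ + (n : ℂ) + 1) * a (n + 2) m + (s₂ + (m : ℂ) + 1) * a n (m + 2)
        + (s₃ - (n : ℂ) - (m : ℂ) - 1) * a n m = 0)
    (h2 : ∀ n m : ℤ, (s₁ - (n : ℂ) + 1) * a (n - 2) m + (s₂ - (m : ℂ) + 1) * a n (m - 2)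
        + (s₃ + (n : ℂ) + (m : ℂ) - 1) * a n m = 0) :
    ∀ n m : ℤ, (s₁ - (n : ℂ) + 1) * (s₂ + (m : ℂ) + 1) * a (n - 2) (m + 2)
        - (s₃ ^ 2 - s₁ ^ 2 - s₂ ^ 2 - 2 * (n : ℂ) * (m : ℂ) + 1) * a n m
        + (s₁ + (n : ℂ) + 1) * (s₂ - (m : ℂ) + 1) * a (n + 2) (m - 2) = 0 := by
  intro n m
  have e1 := h2 (n + 2) m
  have e2 := h1 n m
  have e3 := h2 n (m + 2)
  push_cast at e1 e3
  have hx : n + 2 - 2 = n := by ring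
  have hy : m + 2 - 2 = m := by ring
  rw [hx] at e1
  rw [hy] at e3
  linear_combination (s₁ + (n : ℂ) + 1) * e1 - (s₃ + (n : ℂ) + (m : ℂ) + 1) * e2
    + (s₂ + (m : ℂ) + 1) * e3
end

section
/- The key q-identity: for all complex s₃ and integers n, m, [(s₃-n-m+1)/2]_q [(s₃+n+m-1)/2]_q - q^{-m}[(s₁+n-1)/2]_q [(s₁-n+1)/2]_q - q^{n}[(s₂-m+1)/2]_q [(s₂+m-1)/2]_q + q^{-m}[(s₁+n+1)/2]_q [(s₁-n-1)/2]_q + q^{n}[(s₂+m+1)/2]_q [(s₂-m-1)/2]_q = [(s₃+n+m+1)/2]_q [(s₃-n-m-1)/2]_q, where [x]_q = (q^x - q^{-x})/(q - q^{-1}). -/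
noncomputable def qpow (lq x : ℂ) : ℂ := Complex.exp (x * lq)

/-- [x]_q = (q^x - q^{-x})/(q - q⁻¹). -/
noncomputable def qnum (q lq x : ℂ) : ℂ := (qpow lq x - qpow lq (-x)) / (q - q⁻¹)

set_option maxHeartbeats 1000000 in
/-- The key q-identity used in the proof of Lemma 2.5. -/
theorem stmt14 (q lq s₁ s₂ s₃ : ℂ) (hq0 : q ≠ 0) (hq1 : q ≠ 1) (hq2 : q ≠ -1)
    (hlq : Complex.exp lq = q) (n m : ℤ) :
    qnum q lq ((s₃ - (n : ℂ) - (m : ℂ) + 1) / 2) * qnum q lq ((s₃ + (n : ℂ) + (m : ℂ) - 1) / 2)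
      - qpow lq (-(m : ℂ)) * qnum q lq ((s₁ + (n : ℂ) - 1) / 2) * qnum q lq ((s₁ - (n : ℂ) + 1) / 2)
      - qpow lq (n : ℂ) * qnum q lq ((s₂ - (m : ℂ) + 1) / 2) * qnum q lq ((s₂ + (m : ℂ) - 1) / 2)
      + qpow lq (-(m : ℂ)) * qnum q lq ((s₁ + (n : ℂ) + 1) / 2) * qnum q lq ((s₁ - (n : ℂ) - 1) / 2)
      + qpow lq (n : ℂ) * qnum q lq ((s₂ + (m : ℂ) + 1) / 2) * qnum q lq ((s₂ - (m : ℂ) - 1) / 2)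
    = qnum q lq ((s₃ + (n : ℂ) + (m : ℂ) + 1) / 2) * qnum q lq ((s₃ - (n : ℂ) - (m : ℂ) - 1) / 2) := by
  have key : ∀ x y : ℂ, qnum q lq x * qnum q lq y =
      ((qpow lq x - qpow lq (-x)) * (qpow lq y - qpow lq (-y))) / (q - q⁻¹)^2 := by
    intro x y
    unfold qnum
    rw [div_mul_div_comm, sq]
  simp only [mul_assoc, key, ← mul_div_assoc, div_sub_div_same, ← add_div]
  congr 1
  simp only [qpow]
  ring_nf
  simp only [← Complex.exp_add, ← Complex.exp_nat_mul]
  ring_nf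
end

section
/- Suppose a : ℤ² → ℂ satisfies: (i) the F-equation q^{n-2}[(s₁-n+1)/2]_q a(n-2,m) + q^{n+m-2}[(s₂-m+1)/2]_q a(n,m-2) + [(s₃+n+m-1)/2]_q a(n,m) = 0 for all (n,m) with n+m ≥ N+2, and (ii) the diagonal equation (2.4.5) on the line n+m = N. If moreover [(s₃+k+1)/2]_q ≠ 0 for all relevant k, then a also satisfies the E-equation [(s₁+n+1)/2]_q a(n+2,m) + q^n [(s₂+m+1)/2]_q a(n,m+2) + q^{n+m}[(s₃-n-m-1)/2]_q a(n,m) = 0 for all (n,m) with n+m = N. -/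
set_option maxHeartbeats 2000000 in
/-- Lemma 2.5: if a satisfies the F-equation (2.4.2) above the line n+m = N and
    the diagonal equation (2.4.5) on the line n+m = N, and the relevant
    coefficients [(s₃+k+1)/2]_q are nonzero, then a satisfies the E-equation
    (2.4.1) on the line n+m = N. -/
theorem stmt16 (q lq s₁ s₂ s₃ : ℂ) (hq0 : q ≠ 0)
    (hroot : ∀ n : ℕ, n ≠ 0 → q ^ n ≠ 1) (hlq : Complex.exp lq = q)
    (N : ℤ) (a : ℤ → ℤ → ℂ)
    (hF : ∀ n m : ℤ, n + m ≥ N + 2 →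
      qpow lq ((n : ℂ) - 2) * qnum q lq ((s₁ - (n : ℂ) + 1) / 2) * a (n - 2) m
        + qpow lq ((n : ℂ) + (m : ℂ) - 2) * qnum q lq ((s₂ - (m : ℂ) + 1) / 2) * a n (m - 2)
        + qnum q lq ((s₃ + (n : ℂ) + (m : ℂ) - 1) / 2) * a n m = 0)
    (hdiag : ∀ n m : ℤ, n + m = N →
      (qnum q lq ((s₃ - (n : ℂ) - (m : ℂ) + 1) / 2) * qnum q lq ((s₃ + (n : ℂ) + (m : ℂ) - 1) / 2)
          - qpow lq (-(m : ℂ)) * qnum q lq ((s₁ + (n : ℂ) - 1) / 2) * qnum q lq ((s₁ - (n : ℂ) + 1) / 2)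
          - qpow lq (n : ℂ) * qnum q lq ((s₂ - (m : ℂ) + 1) / 2) * qnum q lq ((s₂ + (m : ℂ) - 1) / 2))
          * a n m
        = qpow lq ((n : ℂ) - (m : ℂ) - 2) * qnum q lq ((s₁ - (n : ℂ) + 1) / 2)
            * qnum q lq ((s₂ + (m : ℂ) + 1) / 2) * a (n - 2) (m + 2)
          + qnum q lq ((s₂ - (m : ℂ) + 1) / 2) * qnum q lq ((s₁ + (n : ℂ) + 1) / 2)
            * a (n + 2) (m - 2))
    (hnz : ∀ k : ℤ, k ≥ N → qnum q lq ((s₃ + (k : ℂ) + 1) / 2) ≠ 0) :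
    ∀ n m : ℤ, n + m = N →
      qnum q lq ((s₁ + (n : ℂ) + 1) / 2) * a (n + 2) m
        + qpow lq (n : ℂ) * qnum q lq ((s₂ + (m : ℂ) + 1) / 2) * a n (m + 2)
        + qpow lq ((n : ℂ) + (m : ℂ)) * qnum q lq ((s₃ - (n : ℂ) - (m : ℂ) - 1) / 2) * a n m
        = 0 := by
  intro n m hnm
  have hq2 : q ^ 2 ≠ 1 := hroot 2 (by norm_num)
  have hd : q - q⁻¹ ≠ 0 := by
    intro h
    rw [sub_eq_zero] at h
    apply hq2
    rw [sq]
    nth_rewrite 2 [h]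
    exact mul_inv_cancel₀ hq0
  have hadd : ∀ x y : ℂ, qpow lq (x + y) = qpow lq x * qpow lq y := fun x y => by
    simp [qpow, add_mul, Complex.exp_add]
  have hneg : ∀ x : ℂ, qpow lq (-x) = (qpow lq x)⁻¹ := fun x => by
    simp [qpow, neg_mul, Complex.exp_neg]
  have h0 : qpow lq 0 = 1 := by simp [qpow]
  have hne : ∀ x : ℂ, qpow lq x ≠ 0 := fun x => Complex.exp_ne_zero _
  have hqn : ∀ z : ℂ, qnum q lq z = (qpow lq z - (qpow lq z)⁻¹) / (q - q⁻¹) := fun z => by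
    rw [qnum, hneg]
  have h1 := hF (n + 2) m (by omega)
  have h2 := hF n (m + 2) (by omega)
  have h3 := hdiag n m hnm
  have hc3 := hnz (n + m) (by omega)
  push_cast at h1 h2 hc3
  simp only [add_sub_cancel_right] at h1 h2
  -- conversions of qpow arguments to atomic monomials
  have c1 : qpow lq ((s₁ - ((n:ℂ) + 2) + 1) / 2)
      = qpow lq (s₁/2) * qpow lq (-((n:ℂ)/2)) * qpow lq (-(1/2)) := by
    rw [show (s₁ - ((n:ℂ) + 2) + 1) / 2 = s₁/2 + -((n:ℂ)/2) + -(1/2) by ring, hadd, hadd]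
  have c2 : qpow lq ((s₂ - (m:ℂ) + 1) / 2)
      = qpow lq (s₂/2) * qpow lq (-((m:ℂ)/2)) * qpow lq (1/2) := by
    rw [show (s₂ - (m:ℂ) + 1) / 2 = s₂/2 + -((m:ℂ)/2) + 1/2 by ring, hadd, hadd]
  have c3e : qpow lq ((s₃ + ((n:ℂ) + 2) + (m:ℂ) - 1) / 2)
      = qpow lq (s₃/2) * qpow lq ((n:ℂ)/2) * qpow lq ((m:ℂ)/2) * qpow lq (1/2) := by
    rw [show (s₃ + ((n:ℂ) + 2) + (m:ℂ) - 1) / 2 = s₃/2 + (n:ℂ)/2 + (m:ℂ)/2 + 1/2 by ring,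
      hadd, hadd, hadd]
  have c4 : qpow lq ((n:ℂ)) = qpow lq ((n:ℂ)/2) * qpow lq ((n:ℂ)/2) := by
    rw [← hadd]; congr 1; ring
  have c5 : qpow lq ((n:ℂ) + 2 + (m:ℂ) - 2)
      = qpow lq ((n:ℂ)/2) * qpow lq ((n:ℂ)/2) * qpow lq ((m:ℂ)/2) * qpow lq ((m:ℂ)/2) := by
    rw [show (n:ℂ) + 2 + (m:ℂ) - 2 = (n:ℂ)/2 + (n:ℂ)/2 + (m:ℂ)/2 + (m:ℂ)/2 by ring,
      hadd, hadd, hadd]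
  have c6 : qpow lq ((n:ℂ) - 2)
      = qpow lq ((n:ℂ)/2) * qpow lq ((n:ℂ)/2) * qpow lq (-(1/2)) * qpow lq (-(1/2))
        * qpow lq (-(1/2)) * qpow lq (-(1/2)) := by
    rw [show (n:ℂ) - 2 = (n:ℂ)/2 + (n:ℂ)/2 + -(1/2) + -(1/2) + -(1/2) + -(1/2) by ring,
      hadd, hadd, hadd, hadd, hadd]
  have c7 : qpow lq ((s₁ - (n:ℂ) + 1) / 2)
      = qpow lq (s₁/2) * qpow lq (-((n:ℂ)/2)) * qpow lq (1/2) := by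
    rw [show (s₁ - (n:ℂ) + 1) / 2 = s₁/2 + -((n:ℂ)/2) + 1/2 by ring, hadd, hadd]
  have c8 : qpow lq ((n:ℂ) + ((m:ℂ) + 2) - 2)
      = qpow lq ((n:ℂ)/2) * qpow lq ((n:ℂ)/2) * qpow lq ((m:ℂ)/2) * qpow lq ((m:ℂ)/2) := by
    rw [show (n:ℂ) + ((m:ℂ) + 2) - 2 = (n:ℂ)/2 + (n:ℂ)/2 + (m:ℂ)/2 + (m:ℂ)/2 by ring,
      hadd, hadd, hadd]
  have c9 : qpow lq ((s₂ - ((m:ℂ) + 2) + 1) / 2)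
      = qpow lq (s₂/2) * qpow lq (-((m:ℂ)/2)) * qpow lq (-(1/2)) := by
    rw [show (s₂ - ((m:ℂ) + 2) + 1) / 2 = s₂/2 + -((m:ℂ)/2) + -(1/2) by ring, hadd, hadd]
  have c10 : qpow lq ((s₃ + (n:ℂ) + ((m:ℂ) + 2) - 1) / 2)
      = qpow lq (s₃/2) * qpow lq ((n:ℂ)/2) * qpow lq ((m:ℂ)/2) * qpow lq (1/2) := by
    rw [show (s₃ + (n:ℂ) + ((m:ℂ) + 2) - 1) / 2 = s₃/2 + (n:ℂ)/2 + (m:ℂ)/2 + 1/2 by ring,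
      hadd, hadd, hadd]
  have c11 : qpow lq ((s₃ - (n:ℂ) - (m:ℂ) + 1) / 2)
      = qpow lq (s₃/2) * qpow lq (-((n:ℂ)/2)) * qpow lq (-((m:ℂ)/2)) * qpow lq (1/2) := by
    rw [show (s₃ - (n:ℂ) - (m:ℂ) + 1) / 2 = s₃/2 + -((n:ℂ)/2) + -((m:ℂ)/2) + 1/2 by ring,
      hadd, hadd, hadd]
  have c12 : qpow lq ((s₃ + (n:ℂ) + (m:ℂ) - 1) / 2)
      = qpow lq (s₃/2) * qpow lq ((n:ℂ)/2) * qpow lq ((m:ℂ)/2) * qpow lq (-(1/2)) := by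
    rw [show (s₃ + (n:ℂ) + (m:ℂ) - 1) / 2 = s₃/2 + (n:ℂ)/2 + (m:ℂ)/2 + -(1/2) by ring,
      hadd, hadd, hadd]
  have c13 : qpow lq (-(m:ℂ)) = qpow lq (-((m:ℂ)/2)) * qpow lq (-((m:ℂ)/2)) := by
    rw [show -(m:ℂ) = -((m:ℂ)/2) + -((m:ℂ)/2) by ring, hadd]
  have c14 : qpow lq ((s₁ + (n:ℂ) - 1) / 2)
      = qpow lq (s₁/2) * qpow lq ((n:ℂ)/2) * qpow lq (-(1/2)) := by
    rw [show (s₁ + (n:ℂ) - 1) / 2 = s₁/2 + (n:ℂ)/2 + -(1/2) by ring, hadd, hadd]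
  have c15 : qpow lq ((s₂ + (m:ℂ) - 1) / 2)
      = qpow lq (s₂/2) * qpow lq ((m:ℂ)/2) * qpow lq (-(1/2)) := by
    rw [show (s₂ + (m:ℂ) - 1) / 2 = s₂/2 + (m:ℂ)/2 + -(1/2) by ring, hadd, hadd]
  have c16 : qpow lq ((n:ℂ) - (m:ℂ) - 2)
      = qpow lq ((n:ℂ)/2) * qpow lq ((n:ℂ)/2) * qpow lq (-((m:ℂ)/2)) * qpow lq (-((m:ℂ)/2))
        * qpow lq (-(1/2)) * qpow lq (-(1/2)) * qpow lq (-(1/2)) * qpow lq (-(1/2)) := by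
    rw [show (n:ℂ) - (m:ℂ) - 2
        = (n:ℂ)/2 + (n:ℂ)/2 + -((m:ℂ)/2) + -((m:ℂ)/2) + -(1/2) + -(1/2) + -(1/2) + -(1/2)
        by ring, hadd, hadd, hadd, hadd, hadd, hadd, hadd]
  have c17 : qpow lq ((s₂ + (m:ℂ) + 1) / 2)
      = qpow lq (s₂/2) * qpow lq ((m:ℂ)/2) * qpow lq (1/2) := by
    rw [show (s₂ + (m:ℂ) + 1) / 2 = s₂/2 + (m:ℂ)/2 + 1/2 by ring, hadd, hadd]
  have c18 : qpow lq ((s₁ + (n:ℂ) + 1) / 2)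
      = qpow lq (s₁/2) * qpow lq ((n:ℂ)/2) * qpow lq (1/2) := by
    rw [show (s₁ + (n:ℂ) + 1) / 2 = s₁/2 + (n:ℂ)/2 + 1/2 by ring, hadd, hadd]
  have c19 : qpow lq ((n:ℂ) + (m:ℂ))
      = qpow lq ((n:ℂ)/2) * qpow lq ((n:ℂ)/2) * qpow lq ((m:ℂ)/2) * qpow lq ((m:ℂ)/2) := by
    rw [show (n:ℂ) + (m:ℂ) = (n:ℂ)/2 + (n:ℂ)/2 + (m:ℂ)/2 + (m:ℂ)/2 by ring, hadd, hadd, hadd]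
  have c20 : qpow lq ((s₃ - (n:ℂ) - (m:ℂ) - 1) / 2)
      = qpow lq (s₃/2) * qpow lq (-((n:ℂ)/2)) * qpow lq (-((m:ℂ)/2)) * qpow lq (-(1/2)) := by
    rw [show (s₃ - (n:ℂ) - (m:ℂ) - 1) / 2 = s₃/2 + -((n:ℂ)/2) + -((m:ℂ)/2) + -(1/2) by ring,
      hadd, hadd, hadd]
  have c21 : qpow lq ((s₃ + ((n:ℂ) + (m:ℂ)) + 1) / 2)
      = qpow lq (s₃/2) * qpow lq ((n:ℂ)/2) * qpow lq ((m:ℂ)/2) * qpow lq (1/2) := by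
    rw [show (s₃ + ((n:ℂ) + (m:ℂ)) + 1) / 2 = s₃/2 + (n:ℂ)/2 + (m:ℂ)/2 + 1/2 by ring,
      hadd, hadd, hadd]
  simp only [hqn] at h1 h2 h3 hc3 ⊢
  rw [c4, c1, c5, c2, c3e] at h1
  rw [c6, c7, c8, c9, c10] at h2
  rw [c11, c12, c13, c14, c7, c2, c15, c4, c16, c17, c18] at h3
  rw [c18, c4, c17, c19, c20]
  rw [c21] at hc3
  simp only [hneg] at h1 h2 h3 hc3 ⊢
  set A := qpow lq (s₁/2) with hA
  set B := qpow lq (s₂/2) with hB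
  set C := qpow lq (s₃/2) with hC
  set X := qpow lq ((n:ℂ)/2) with hX
  set Y := qpow lq ((m:ℂ)/2) with hY
  set R := qpow lq (1/2) with hR
  have hA0 : A ≠ 0 := hne _
  have hB0 : B ≠ 0 := hne _
  have hC0 : C ≠ 0 := hne _
  have hX0 : X ≠ 0 := hne _
  have hY0 : Y ≠ 0 := hne _
  have hR0 : R ≠ 0 := hne _
  obtain ⟨d, hdq, hd0⟩ : ∃ d : ℂ, d = q - q⁻¹ ∧ d ≠ 0 := ⟨q - q⁻¹, rfl, hd⟩
  rw [← hdq] at h1 h2 h3 hc3 ⊢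
  refine (mul_eq_zero.mp ?_).resolve_left hc3
  linear_combination (norm := (field_simp [hA0, hB0, hC0, hX0, hY0, hR0, hd0]; ring))
    ((A * X * R - (A * X * R)⁻¹) / d) * h1
    + (X * X * ((B * Y * R - (B * Y * R)⁻¹) / d)) * h2
    + (X * X * Y * Y) * h3
end
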